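/- arXiv:1709.05572 — 3 statements merged into one kernel-verified Lean document; each statement's English description precedes it below -/
import Mathlib

section
/- Let D : [0,1] × [0,∞) → ℝ be such that for each t ≥ 0 the map r ↦ D(r,t) is twice continuously differentiable, and suppose there are constants m > 0, M ≥ 0, D_m ≥ 0 with D(r,t) ≥ m, |∂²D/∂r²(r,t)| ≤ M, and max{0, −(D(1,t) + ∂D/∂r(1,t))/2} ≤ D_m for all r ∈ [0,1], t ≥ 0. Let μ ∈ ℝ satisfy μ < −(M/2 + D_m²/m). Then every classical solution w (C² in r, C¹ in t, with w, ∂w/∂r, ∂²w/∂r², ∂w/∂t jointly continuous on [0,1]×[0,∞)) of the target system satisfies, for all t ≥ 0, ∫₀¹ w(r,t)² dr ≤ exp(2(μ + M/2 + D_m²/m) t) · ∫₀¹ w(r,0)² dr; in particular, since the exponent 2(μ + M/2 + D_m²/m) is negative, the origin w ≡ 0 is exponentially stable in the L²(0,1)-norm. -/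
open MeasureTheory intervalIntegral Set Real

lemma sliceCont {f : ℝ → ℝ → ℝ}
    (hf : ContinuousOn (fun p : ℝ × ℝ => f p.1 p.2) (Icc 0 1 ×ˢ Ici 0))
    {t : ℝ} (ht : (0:ℝ) ≤ t) :
    ContinuousOn (fun r => f r t) (Icc (0:ℝ) 1) := by
  have hmap : ContinuousOn (fun x : ℝ => (x, t)) (Icc (0:ℝ) 1) :=
    (continuous_id.prodMk continuous_const).continuousOn
  have := hf.comp hmap (fun x hx => Set.mk_mem_prod hx ht)
  exact this

lemma integ01 {g : ℝ → ℝ} (h : ContinuousOn g (Icc 0 1)) :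
    IntervalIntegrable g MeasureTheory.volume 0 1 := by
  rw [show Icc (0:ℝ) 1 = uIcc 0 1 from (uIcc_of_le zero_le_one).symm] at h
  exact h.intervalIntegrable

-- measurability helper
lemma meas01 {g : ℝ → ℝ} (h : ContinuousOn g (Icc 0 1)) :
    AEStronglyMeasurable g (volume.restrict (uIoc (0:ℝ) 1)) := by
  have h' : ContinuousOn g (uIoc (0:ℝ) 1) := by
    rw [uIoc_of_le zero_le_one]
    exact h.mono Ioc_subset_Icc_self
  exact h'.aestronglyMeasurable measurableSet_uIoc

-- time-slice continuity within a time interval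
lemma tsliceCont {f : ℝ → ℝ → ℝ}
    (hf : ContinuousOn (fun p : ℝ × ℝ => f p.1 p.2) (Icc 0 1 ×ˢ Ici 0))
    {r : ℝ} (hr : r ∈ Icc (0:ℝ) 1) {s : Set ℝ} (hs : s ⊆ Ici 0) {t : ℝ} (ht : t ∈ s) :
    ContinuousWithinAt (fun x => f r x) s t := by
  have hmap : ContinuousWithinAt (fun x : ℝ => (r, x)) s t :=
    (continuous_const.prodMk continuous_id).continuousWithinAt
  have := (hf (r, t) ⟨hr, hs ht⟩).comp hmap (fun x hx => Set.mk_mem_prod hr (hs hx))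
  exact this

lemma key_ineq
    (D Dr Drr w wr wrr : ℝ → ℝ) (m M Dm μ : ℝ)
    (hm : 0 < m)
    (hDr : ∀ r ∈ Icc (0:ℝ) 1, HasDerivWithinAt D (Dr r) (Icc (0:ℝ) 1) r)
    (hDrr' : ∀ r ∈ Icc (0:ℝ) 1, HasDerivWithinAt Dr (Drr r) (Icc (0:ℝ) 1) r)
    (hwr : ∀ r ∈ Icc (0:ℝ) 1, HasDerivWithinAt w (wr r) (Icc (0:ℝ) 1) r)
    (hwrr' : ∀ r ∈ Icc (0:ℝ) 1, HasDerivWithinAt wr (wrr r) (Icc (0:ℝ) 1) r)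
    (cD : ContinuousOn D (Icc 0 1)) (cDr : ContinuousOn Dr (Icc 0 1))
    (cDrr : ContinuousOn Drr (Icc 0 1)) (cW : ContinuousOn w (Icc 0 1))
    (cWr : ContinuousOn wr (Icc 0 1)) (cWrr : ContinuousOn wrr (Icc 0 1))
    (hDlow : ∀ r ∈ Icc (0:ℝ) 1, m ≤ D r)
    (hDrrb : ∀ r ∈ Icc (0:ℝ) 1, |Drr r| ≤ M)
    (hDmb : -((D 1 + Dr 1) / 2) ≤ Dm)
    (hw0 : w 0 = 0) (hwr1 : wr 1 = -(1/2) * w 1) :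
    (∫ r in (0:ℝ)..1, 2 * w r * (D r * wrr r + μ * w r)) ≤
      (2*μ + M + 2*Dm^2/m) * ∫ r in (0:ℝ)..1, (w r)^2 := by
  have hIcc : Ioo (0:ℝ) 1 ⊆ Icc 0 1 := Ioo_subset_Icc_self
  have hu : uIcc (0:ℝ) 1 = Icc 0 1 := uIcc_of_le zero_le_one
  -- pointwise HasDerivAt on the interior
  have hdD : ∀ r ∈ Ioo (0:ℝ) 1, HasDerivAt D (Dr r) r := fun r hr =>
    (hDr r (hIcc hr)).hasDerivAt (Icc_mem_nhds hr.1 hr.2)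
  have hdDr : ∀ r ∈ Ioo (0:ℝ) 1, HasDerivAt Dr (Drr r) r := fun r hr =>
    (hDrr' r (hIcc hr)).hasDerivAt (Icc_mem_nhds hr.1 hr.2)
  have hdW : ∀ r ∈ Ioo (0:ℝ) 1, HasDerivAt w (wr r) r := fun r hr =>
    (hwr r (hIcc hr)).hasDerivAt (Icc_mem_nhds hr.1 hr.2)
  have hdWr : ∀ r ∈ Ioo (0:ℝ) 1, HasDerivAt wr (wrr r) r := fun r hr =>
    (hwrr' r (hIcc hr)).hasDerivAt (Icc_mem_nhds hr.1 hr.2)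
  -- integrability of everything we need
  have iA : IntervalIntegrable (fun r => Dr r * (w r * wr r)) volume 0 1 :=
    integ01 (cDr.mul (cW.mul cWr))
  have iB : IntervalIntegrable (fun r => D r * (wr r * wr r)) volume 0 1 :=
    integ01 (cD.mul (cWr.mul cWr))
  have iC : IntervalIntegrable (fun r => D r * (w r * wrr r)) volume 0 1 :=
    integ01 (cD.mul (cW.mul cWrr))
  have iD : IntervalIntegrable (fun r => Drr r * (w r * w r)) volume 0 1 :=
    integ01 (cDrr.mul (cW.mul cW))
  have iE : IntervalIntegrable (fun r => w r * wr r) volume 0 1 :=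
    integ01 (cW.mul cWr)
  have iV : IntervalIntegrable (fun r => (w r)^2) volume 0 1 :=
    integ01 (cW.pow 2)
  have iW : IntervalIntegrable (fun r => wr r * wr r) volume 0 1 :=
    integ01 (cWr.mul cWr)
  set a := ∫ r in (0:ℝ)..1, Dr r * (w r * wr r) with ha
  set b := ∫ r in (0:ℝ)..1, D r * (wr r * wr r) with hb
  set c := ∫ r in (0:ℝ)..1, D r * (w r * wrr r) with hc
  set d := ∫ r in (0:ℝ)..1, Drr r * (w r * w r) with hd
  set e := ∫ r in (0:ℝ)..1, w r * wr r with he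
  set V := ∫ r in (0:ℝ)..1, (w r)^2 with hV
  set W := ∫ r in (0:ℝ)..1, wr r * wr r with hW
  -- FTC identity 1 : a + (b + c) = D 1 * (w 1 * wr 1)
  have H1 : a + (b + c) = D 1 * (w 1 * wr 1) := by
    have hcont : ContinuousOn (fun r => D r * (w r * wr r)) (Icc 0 1) :=
      cD.mul (cW.mul cWr)
    have hder : ∀ r ∈ Ioo (0:ℝ) 1, HasDerivWithinAt (fun r => D r * (w r * wr r))
        (Dr r * (w r * wr r) + D r * (wr r * wr r + w r * wrr r)) (Ioi r) r := by
      intro r hr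
      exact (((hdD r hr).mul ((hdW r hr).mul (hdWr r hr)))).hasDerivWithinAt
    have hint : IntervalIntegrable
        (fun r => Dr r * (w r * wr r) + D r * (wr r * wr r + w r * wrr r)) volume 0 1 :=
      integ01 (by exact (cDr.mul (cW.mul cWr)).add (cD.mul ((cWr.mul cWr).add (cW.mul cWrr))))
    have := integral_eq_sub_of_hasDeriv_right_of_le zero_le_one hcont hder hint
    rw [show (∫ r in (0:ℝ)..1, (Dr r * (w r * wr r) + D r * (wr r * wr r + w r * wrr r)))
        = a + (b + c) from ?_] at this
    · rw [this, hw0]; ring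
    · rw [integral_add iA (integ01 (g := fun r => D r * (wr r * wr r + w r * wrr r)) (cD.mul ((cWr.mul cWr).add (cW.mul cWrr))))]
      congr 1
      rw [integral_congr (g := fun r => D r * (wr r * wr r) + D r * (w r * wrr r))
        (fun x _ => by ring)]
      exact integral_add iB iC
  -- FTC identity 2 : d + 2*a = Dr 1 * (w 1 * w 1)
  have H2 : d + 2*a = Dr 1 * (w 1 * w 1) := by
    have hcont : ContinuousOn (fun r => Dr r * (w r * w r)) (Icc 0 1) :=
      cDr.mul (cW.mul cW)
    have hder : ∀ r ∈ Ioo (0:ℝ) 1, HasDerivWithinAt (fun r => Dr r * (w r * w r))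
        (Drr r * (w r * w r) + Dr r * (wr r * w r + w r * wr r)) (Ioi r) r := by
      intro r hr
      exact (((hdDr r hr).mul ((hdW r hr).mul (hdW r hr)))).hasDerivWithinAt
    have hint : IntervalIntegrable
        (fun r => Drr r * (w r * w r) + Dr r * (wr r * w r + w r * wr r)) volume 0 1 :=
      integ01 ((cDrr.mul (cW.mul cW)).add (cDr.mul ((cWr.mul cW).add (cW.mul cWr))))
    have := integral_eq_sub_of_hasDeriv_right_of_le zero_le_one hcont hder hint
    rw [show (∫ r in (0:ℝ)..1, (Drr r * (w r * w r) + Dr r * (wr r * w r + w r * wr r)))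
        = d + 2*a from ?_] at this
    · rw [this, hw0]; ring
    · rw [integral_add iD (integ01 (g := fun r => Dr r * (wr r * w r + w r * wr r)) (cDr.mul ((cWr.mul cW).add (cW.mul cWr))))]
      congr 1
      rw [integral_congr (g := fun r => 2 * (Dr r * (w r * wr r))) (fun x _ => by ring)]
      exact intervalIntegral.integral_const_mul 2 _
  -- FTC identity 3 : 2*e = w 1 * w 1
  have H3 : 2*e = w 1 * w 1 := by
    have hcont : ContinuousOn (fun r => w r * w r) (Icc 0 1) := cW.mul cW
    have hder : ∀ r ∈ Ioo (0:ℝ) 1, HasDerivWithinAt (fun r => w r * w r)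
        (wr r * w r + w r * wr r) (Ioi r) r := fun r hr =>
      ((hdW r hr).mul (hdW r hr)).hasDerivWithinAt
    have hint : IntervalIntegrable (fun r => wr r * w r + w r * wr r) volume 0 1 :=
      integ01 ((cWr.mul cW).add (cW.mul cWr))
    have := integral_eq_sub_of_hasDeriv_right_of_le zero_le_one hcont hder hint
    rw [show (∫ r in (0:ℝ)..1, (wr r * w r + w r * wr r)) = 2*e from ?_] at this
    · rw [this, hw0]; ring
    · rw [integral_congr (g := fun r => 2 * (w r * wr r)) (fun x _ => by ring)]
      exact integral_const_mul 2 _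
  -- Young inequality integrated
  have hY : 4*Dm*e ≤ 2*(Dm^2/m)*V + 2*m*W := by
    have hpt : ∀ r ∈ Icc (0:ℝ) 1,
        4*Dm*(w r * wr r) ≤ 2*(Dm^2/m)*(w r)^2 + 2*m*(wr r * wr r) := by
      intro r _
      have hiden : 2*(Dm^2/m)*(w r)^2 + 2*m*(wr r * wr r) - 4*Dm*(w r * wr r)
          = (2/m) * (Dm * w r - m * wr r)^2 := by
        field_simp; ring
      have hnn : 0 ≤ (2/m) * (Dm * w r - m * wr r)^2 :=
        mul_nonneg (by positivity) (sq_nonneg _)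
      linarith [hiden ▸ hnn]
    have := integral_mono_on zero_le_one
      (integ01 (g := fun r => 4*Dm*(w r * wr r)) ((continuousOn_const).mul (cW.mul cWr)))
      (integ01 (g := fun r => 2*(Dm^2/m)*(w r)^2 + 2*m*(wr r * wr r)) (((continuousOn_const).mul (cW.pow 2)).add
        ((continuousOn_const).mul (cWr.mul cWr)))) hpt
    rwa [intervalIntegral.integral_const_mul, integral_add
        ((iV.const_mul _)) ((iW.const_mul _)), intervalIntegral.integral_const_mul, intervalIntegral.integral_const_mul] at this
  -- bound on d
  have hdM : d ≤ M*V := by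
    have hpt : ∀ r ∈ Icc (0:ℝ) 1, Drr r * (w r * w r) ≤ M * (w r)^2 := by
      intro r hr
      have h1 := (abs_le.1 (hDrrb r hr)).2
      nlinarith [sq_nonneg (w r)]
    have := integral_mono_on zero_le_one iD (integ01 (g := fun r => M * (w r)^2) ((continuousOn_const).mul (cW.pow 2))) hpt
    rwa [intervalIntegral.integral_const_mul] at this
  -- bound on b
  have hbm : m*W ≤ b := by
    have hpt : ∀ r ∈ Icc (0:ℝ) 1, m * (wr r * wr r) ≤ D r * (wr r * wr r) := fun r hr =>
      mul_le_mul_of_nonneg_right (hDlow r hr) (mul_self_nonneg _)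
    have := integral_mono_on zero_le_one (integ01 (g := fun r => m * (wr r * wr r)) ((continuousOn_const).mul (cWr.mul cWr)))
      iB hpt
    rwa [intervalIntegral.integral_const_mul] at this
  -- boundary bound
  have hbd : -(D 1 + Dr 1) * (w 1 * w 1) ≤ 2*Dm*(w 1 * w 1) := by
    nlinarith [mul_self_nonneg (w 1)]
  -- rewrite the target integral
  have htarget : (∫ r in (0:ℝ)..1, 2 * w r * (D r * wrr r + μ * w r)) = 2*c + 2*μ*V := by
    rw [integral_congr (g := fun r => 2 * (D r * (w r * wrr r)) + 2*μ*(w r)^2)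
      (fun x _ => by ring)]
    rw [integral_add (iC.const_mul 2) (iV.const_mul _), intervalIntegral.integral_const_mul, intervalIntegral.integral_const_mul]
  have H3' : 2*Dm*(w 1 * w 1) = 4*Dm*e := by rw [← H3]; ring
  rw [htarget, hwr1] at *
  have e1 : 2*c = -(D 1 + Dr 1) * (w 1 * w 1) + d - 2*b := by linarith [H1, H2]
  have e2 : 2*c ≤ 2*Dm*(w 1 * w 1) + M*V - 2*m*W := by linarith [e1, hbd, hdM, hbm]
  have e3 : 2*c ≤ 2*(Dm^2/m)*V + M*V := by linarith [e2, H3', hY]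
  have e4 : (2*μ + M + 2*Dm^2/m) * V = 2*μ*V + M*V + 2*(Dm^2/m)*V := by ring
  linarith [e3, e4]

/-- Lyapunov exponential decay estimate for the target system
`∂w/∂t = D ∂²w/∂r² + μ w`, `w(0,t) = 0`, `∂w/∂r(1,t) = -(1/2) w(1,t)`. -/
theorem target_system_L2_exponential_stability
    (D Dr Drr : ℝ → ℝ → ℝ)
    (w wr wrr wt : ℝ → ℝ → ℝ)
    (m M Dm μ : ℝ)
    -- D is C² in r for each t ≥ 0, with jointly continuous derivatives
    (hDr : ∀ t ∈ Ici (0:ℝ), ∀ r ∈ Icc (0:ℝ) 1,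
      HasDerivWithinAt (fun x => D x t) (Dr r t) (Icc (0:ℝ) 1) r)
    (hDrr : ∀ t ∈ Ici (0:ℝ), ∀ r ∈ Icc (0:ℝ) 1,
      HasDerivWithinAt (fun x => Dr x t) (Drr r t) (Icc (0:ℝ) 1) r)
    (hDcont : ContinuousOn (fun p : ℝ × ℝ => D p.1 p.2) (Icc 0 1 ×ˢ Ici 0))
    (hDrcont : ContinuousOn (fun p : ℝ × ℝ => Dr p.1 p.2) (Icc 0 1 ×ˢ Ici 0))
    (hDrrcont : ContinuousOn (fun p : ℝ × ℝ => Drr p.1 p.2) (Icc 0 1 ×ˢ Ici 0))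
    -- bounds on the coefficients
    (hm : 0 < m) (hM : 0 ≤ M) (hDm : 0 ≤ Dm)
    (hDlow : ∀ r ∈ Icc (0:ℝ) 1, ∀ t ∈ Ici (0:ℝ), m ≤ D r t)
    (hDrrbound : ∀ r ∈ Icc (0:ℝ) 1, ∀ t ∈ Ici (0:ℝ), |Drr r t| ≤ M)
    (hDmbound : ∀ t ∈ Ici (0:ℝ), max 0 (-((D 1 t + Dr 1 t) / 2)) ≤ Dm)
    -- choice of μ
    (hμ : μ < -(M / 2 + Dm ^ 2 / m))
    -- w is a classical solution: derivatives in r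
    (hwr : ∀ t ∈ Ici (0:ℝ), ∀ r ∈ Icc (0:ℝ) 1,
      HasDerivWithinAt (fun x => w x t) (wr r t) (Icc (0:ℝ) 1) r)
    (hwrr : ∀ t ∈ Ici (0:ℝ), ∀ r ∈ Icc (0:ℝ) 1,
      HasDerivWithinAt (fun x => wr x t) (wrr r t) (Icc (0:ℝ) 1) r)
    -- derivative in t
    (hwt : ∀ r ∈ Icc (0:ℝ) 1, ∀ t ∈ Ici (0:ℝ),
      HasDerivWithinAt (fun τ => w r τ) (wt r t) (Ici (0:ℝ)) t)
    -- joint continuity of w, wr, wrr, wt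
    (hwcont : ContinuousOn (fun p : ℝ × ℝ => w p.1 p.2) (Icc 0 1 ×ˢ Ici 0))
    (hwrcont : ContinuousOn (fun p : ℝ × ℝ => wr p.1 p.2) (Icc 0 1 ×ˢ Ici 0))
    (hwrrcont : ContinuousOn (fun p : ℝ × ℝ => wrr p.1 p.2) (Icc 0 1 ×ˢ Ici 0))
    (hwtcont : ContinuousOn (fun p : ℝ × ℝ => wt p.1 p.2) (Icc 0 1 ×ˢ Ici 0))
    -- w satisfies the target system
    (hPDE : ∀ r ∈ Icc (0:ℝ) 1, ∀ t ∈ Ici (0:ℝ),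
      wt r t = D r t * wrr r t + μ * w r t)
    (hBC0 : ∀ t ∈ Ici (0:ℝ), w 0 t = 0)
    (hBC1 : ∀ t ∈ Ici (0:ℝ), wr 1 t = -(1/2) * w 1 t) :
    (∀ t ∈ Ici (0:ℝ),
      (∫ r in (0:ℝ)..1, (w r t) ^ 2) ≤
        Real.exp (2 * (μ + M / 2 + Dm ^ 2 / m) * t) * ∫ r in (0:ℝ)..1, (w r 0) ^ 2)
    ∧ 2 * (μ + M / 2 + Dm ^ 2 / m) < 0 := by
  constructor
  case right => linarith [div_nonneg (sq_nonneg Dm) (le_of_lt hm)]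
  intro T hT
  set lam := μ + M / 2 + Dm ^ 2 / m with hlam
  set V : ℝ → ℝ := fun t => ∫ r in (0:ℝ)..1, (w r t) ^ 2 with hVdef
  -- the key dissipativity inequality at each time t ≥ 0
  have key : ∀ t, 0 ≤ t → (∫ r in (0:ℝ)..1, 2 * w r t * wt r t) ≤ 2 * lam * V t := by
    intro t ht
    have h1 : (∫ r in (0:ℝ)..1, 2 * w r t * wt r t)
        = ∫ r in (0:ℝ)..1, 2 * w r t * (D r t * wrr r t + μ * w r t) := by
      apply integral_congr
      intro r hr
      rw [uIcc_of_le zero_le_one] at hr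
      show 2 * w r t * wt r t = 2 * w r t * (D r t * wrr r t + μ * w r t)
      rw [hPDE r hr t ht]
    have h2 := key_ineq (fun r => D r t) (fun r => Dr r t) (fun r => Drr r t)
      (fun r => w r t) (fun r => wr r t) (fun r => wrr r t) m M Dm μ hm
      (hDr t ht) (hDrr t ht) (hwr t ht) (hwrr t ht)
      (sliceCont hDcont ht) (sliceCont hDrcont ht) (sliceCont hDrrcont ht)
      (sliceCont hwcont ht) (sliceCont hwrcont ht) (sliceCont hwrrcont ht)
      (fun r hr => hDlow r hr t ht) (fun r hr => hDrrbound r hr t ht)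
      (le_trans (le_max_right _ _) (hDmbound t ht)) (hBC0 t ht) (hBC1 t ht)
    rw [h1]
    calc (∫ r in (0:ℝ)..1, 2 * w r t * (D r t * wrr r t + μ * w r t))
        ≤ (2*μ + M + 2*Dm^2/m) * ∫ r in (0:ℝ)..1, (w r t)^2 := h2
      _ = 2 * lam * V t := by rw [hlam]; ring
  -- continuity of V on [0, T]
  have hIT : Icc (0:ℝ) T ⊆ Ici 0 := fun x hx => hx.1
  have hVcont : ContinuousOn V (Icc 0 T) := by
    intro t₀ ht₀
    obtain ⟨C, hC⟩ := (isCompact_Icc.prod isCompact_Icc :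
        IsCompact (Icc (0:ℝ) 1 ×ˢ Icc (0:ℝ) T)).exists_bound_of_continuousOn
      (hwcont.mono (Set.prod_mono_right hIT))
    apply continuousWithinAt_of_dominated_interval (bound := fun _ => C ^ 2)
    · filter_upwards [eventually_mem_nhdsWithin] with x hx
      exact meas01 ((sliceCont hwcont (hIT hx)).pow 2)
    · filter_upwards [eventually_mem_nhdsWithin] with x hx
      refine Filter.Eventually.of_forall (fun r hr => ?_)
      have hr' : r ∈ Icc (0:ℝ) 1 := by
        rw [uIoc_of_le zero_le_one] at hr; exact Ioc_subset_Icc_self hr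
      have hb := hC (r, x) ⟨hr', hx⟩
      have habs : |w r x| ≤ C := by simpa [Real.norm_eq_abs] using hb
      have : |(w r x) ^ 2| = |w r x| ^ 2 := by rw [abs_pow]
      rw [Real.norm_eq_abs, this]
      exact pow_le_pow_left₀ (abs_nonneg _) habs 2
    · exact intervalIntegrable_const
    · refine Filter.Eventually.of_forall (fun r hr => ?_)
      have hr' : r ∈ Icc (0:ℝ) 1 := by
        rw [uIoc_of_le zero_le_one] at hr; exact Ioc_subset_Icc_self hr
      exact (tsliceCont hwcont hr' hIT ht₀).pow 2
  -- derivative of V at interior times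
  have hVderiv : ∀ t, 0 < t →
      HasDerivAt V (∫ r in (0:ℝ)..1, 2 * w r t * wt r t) t := by
    intro t ht
    have hsub : Icc (0:ℝ) (t+1) ⊆ Ici 0 := fun x hx => hx.1
    obtain ⟨C1, hC1⟩ := (isCompact_Icc.prod isCompact_Icc :
        IsCompact (Icc (0:ℝ) 1 ×ˢ Icc (0:ℝ) (t+1))).exists_bound_of_continuousOn
      (hwcont.mono (Set.prod_mono_right hsub))
    obtain ⟨C2, hC2⟩ := (isCompact_Icc.prod isCompact_Icc :
        IsCompact (Icc (0:ℝ) 1 ×ˢ Icc (0:ℝ) (t+1))).exists_bound_of_continuousOn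
      (hwtcont.mono (Set.prod_mono_right hsub))
    have hC1nn : 0 ≤ C1 := le_trans (norm_nonneg _) (hC1 (0, 0) ⟨⟨le_refl _, zero_le_one⟩, ⟨le_refl _, show (0:ℝ) ≤ t + 1 by linarith⟩⟩)
    set ε : ℝ := min (t/2) (1/2) with hε
    have hεpos : 0 < ε := lt_min (by linarith) (by norm_num)
    have hball : ∀ x ∈ Metric.ball t ε, 0 < x ∧ x ≤ t + 1 := by
      intro x hx
      rw [Metric.mem_ball, Real.dist_eq, abs_lt] at hx
      constructor
      · have : ε ≤ t/2 := min_le_left _ _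
        linarith [hx.1]
      · have : ε ≤ 1/2 := min_le_right _ _
        linarith [hx.2]
    refine (hasDerivAt_integral_of_dominated_loc_of_deriv_le (𝕜 := ℝ) (μ := volume)
      (F := fun x r => (w r x) ^ 2) (F' := fun x r => 2 * w r x * wt r x)
      (x₀ := t) (a := 0) (b := 1) (bound := fun _ => 2 * C1 * C2) (Metric.ball_mem_nhds t hεpos)
      ?_ ?_ ?_ ?_ ?_ ?_).2
    · filter_upwards [eventually_gt_nhds ht] with x hx
      exact meas01 ((sliceCont hwcont (le_of_lt hx)).pow 2)
    · exact integ01 ((sliceCont hwcont (le_of_lt ht)).pow 2)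
    · exact meas01 (((continuousOn_const).mul (sliceCont hwcont (le_of_lt ht))).mul
        (sliceCont hwtcont (le_of_lt ht)))
    · refine Filter.Eventually.of_forall (fun r hr => ?_)
      intro x hx
      have hr' : r ∈ Icc (0:ℝ) 1 := by
        rw [uIoc_of_le zero_le_one] at hr; exact Ioc_subset_Icc_self hr
      obtain ⟨hx0, hx1⟩ := hball x hx
      have hmem : (r, x) ∈ Icc (0:ℝ) 1 ×ˢ Icc (0:ℝ) (t+1) := ⟨hr', ⟨le_of_lt hx0, hx1⟩⟩
      have h1 := hC1 (r, x) hmem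
      have h2 := hC2 (r, x) hmem
      rw [Real.norm_eq_abs] at h1 h2 ⊢
      calc |2 * w r x * wt r x| = 2 * |w r x| * |wt r x| := by
            rw [abs_mul, abs_mul]; simp [abs_of_nonneg]
        _ ≤ 2 * C1 * C2 := by
            apply mul_le_mul _ h2 (abs_nonneg _) (by positivity)
            linarith [h1]
    · exact intervalIntegrable_const
    · refine Filter.Eventually.of_forall (fun r hr => ?_)
      intro x hx
      have hr' : r ∈ Icc (0:ℝ) 1 := by
        rw [uIoc_of_le zero_le_one] at hr; exact Ioc_subset_Icc_self hr
      have hx0 := (hball x hx).1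
      have h0 := (hwt r hr' x (le_of_lt hx0)).hasDerivAt (Ici_mem_nhds hx0)
      have := h0.pow 2
      refine this.congr_deriv ?_
      push_cast
      ring
  -- the Lyapunov function G
  set G : ℝ → ℝ := fun s => Real.exp (-(2*lam)*s) * V s with hGdef
  have hGcont : ContinuousOn G (Icc 0 T) :=
    ((Real.continuous_exp.comp (continuous_const.mul continuous_id)).continuousOn).mul hVcont
  have hGderiv : ∀ x ∈ interior (Icc (0:ℝ) T), HasDerivAt G
      ((-(2*lam) * Real.exp (-(2*lam)*x)) * V x
        + Real.exp (-(2*lam)*x) * (∫ r in (0:ℝ)..1, 2 * w r x * wt r x)) x := by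
    intro x hx
    rw [interior_Icc] at hx
    have hE : HasDerivAt (fun s => Real.exp (-(2*lam)*s)) (Real.exp (-(2*lam)*x) * (-(2*lam))) x := by
      have hlin : HasDerivAt (fun s : ℝ => -(2*lam)*s) (-(2*lam)) x := by
        simpa using (hasDerivAt_id x).const_mul (-(2*lam))
      exact hlin.exp
    have := hE.mul (hVderiv x hx.1)
    refine this.congr_deriv ?_
    ring
  have hGanti : AntitoneOn G (Icc 0 T) := by
    apply antitoneOn_of_deriv_nonpos (convex_Icc 0 T) hGcont
    · intro x hx
      exact (hGderiv x hx).differentiableAt.differentiableWithinAt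
    · intro x hx
      rw [(hGderiv x hx).deriv]
      have hx' : x ∈ Ioo (0:ℝ) T := by rwa [interior_Icc] at hx
      have hk := key x (le_of_lt hx'.1)
      have hexp : (0:ℝ) < Real.exp (-(2*lam)*x) := Real.exp_pos _
      have : Real.exp (-(2*lam)*x) * (∫ r in (0:ℝ)..1, 2 * w r x * wt r x)
          ≤ Real.exp (-(2*lam)*x) * (2 * lam * V x) :=
        mul_le_mul_of_nonneg_left hk (le_of_lt hexp)
      nlinarith [this]
  have hmem0 : (0:ℝ) ∈ Icc (0:ℝ) T := ⟨le_refl _, hT⟩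
  have hmemT : T ∈ Icc (0:ℝ) T := ⟨hT, le_refl _⟩
  have hGT := hGanti hmem0 hmemT hT
  have hG0 : G 0 = V 0 := by simp [hGdef]
  rw [hG0] at hGT
  have hfin := mul_le_mul_of_nonneg_left hGT (le_of_lt (Real.exp_pos (2*lam*T)))
  calc V T = Real.exp (2*lam*T) * (Real.exp (-(2*lam)*T) * V T) := by
        rw [← mul_assoc, ← Real.exp_add]
        ring_nf
        simp
    _ ≤ Real.exp (2*lam*T) * V 0 := hfin
end

section
/- Let D : [0,1] × [0,∞) → ℝ be such that for each t the map r ↦ D(r,t) is twice continuously differentiable, and let w be a classical solution of the target system such that w, ∂w/∂r, ∂²w/∂r², ∂w/∂t are jointly continuous on [0,1]×[0,∞). Define the Lyapunov function W(t) = (1/2)∫₀¹ w(r,t)² dr. Then for every t > 0, W is differentiable at t and W′(t) = −((D(1,t) + ∂D/∂r(1,t))/2) · w(1,t)² − ∫₀¹ D(r,t) (∂w/∂r(r,t))² dr + ∫₀¹ ((∂²D/∂r²(r,t))/2 + μ) w(r,t)² dr. -/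
open MeasureTheory intervalIntegral Set Real

/-- derivative of the Lyapunov function `W(t) = (1/2)∫₀¹ w(r,t)² dr`
along classical solutions of the target system
`∂w/∂t = D ∂²w/∂r² + μ w`, `w(0,t) = 0`, `∂w/∂r(1,t) = -(1/2) w(1,t)`. -/
theorem lyapunov_derivative_target_system
    (D Dr Drr : ℝ → ℝ → ℝ)
    (w wr wrr wt : ℝ → ℝ → ℝ)
    (μ : ℝ)
    -- D is C² in r for each t
    (hDr : ∀ t ∈ Ici (0:ℝ), ∀ r ∈ Icc (0:ℝ) 1,
      HasDerivWithinAt (fun x => D x t) (Dr r t) (Icc (0:ℝ) 1) r)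
    (hDrr : ∀ t ∈ Ici (0:ℝ), ∀ r ∈ Icc (0:ℝ) 1,
      HasDerivWithinAt (fun x => Dr x t) (Drr r t) (Icc (0:ℝ) 1) r)
    (hDrrcont : ∀ t ∈ Ici (0:ℝ), ContinuousOn (fun x => Drr x t) (Icc 0 1))
    -- w is a classical solution: derivatives in r
    (hwr : ∀ t ∈ Ici (0:ℝ), ∀ r ∈ Icc (0:ℝ) 1,
      HasDerivWithinAt (fun x => w x t) (wr r t) (Icc (0:ℝ) 1) r)
    (hwrr : ∀ t ∈ Ici (0:ℝ), ∀ r ∈ Icc (0:ℝ) 1,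
      HasDerivWithinAt (fun x => wr x t) (wrr r t) (Icc (0:ℝ) 1) r)
    -- derivative in t
    (hwt : ∀ r ∈ Icc (0:ℝ) 1, ∀ t ∈ Ici (0:ℝ),
      HasDerivWithinAt (fun τ => w r τ) (wt r t) (Ici (0:ℝ)) t)
    -- joint continuity of w, wr, wrr, wt on [0,1] × [0,∞)
    (hwcont : ContinuousOn (fun p : ℝ × ℝ => w p.1 p.2) (Icc 0 1 ×ˢ Ici 0))
    (hwrcont : ContinuousOn (fun p : ℝ × ℝ => wr p.1 p.2) (Icc 0 1 ×ˢ Ici 0))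
    (hwrrcont : ContinuousOn (fun p : ℝ × ℝ => wrr p.1 p.2) (Icc 0 1 ×ˢ Ici 0))
    (hwtcont : ContinuousOn (fun p : ℝ × ℝ => wt p.1 p.2) (Icc 0 1 ×ˢ Ici 0))
    -- w satisfies the target system
    (hPDE : ∀ r ∈ Icc (0:ℝ) 1, ∀ t ∈ Ici (0:ℝ),
      wt r t = D r t * wrr r t + μ * w r t)
    (hBC0 : ∀ t ∈ Ici (0:ℝ), w 0 t = 0)
    (hBC1 : ∀ t ∈ Ici (0:ℝ), wr 1 t = -(1/2) * w 1 t)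
    -- the Lyapunov function
    (W : ℝ → ℝ)
    (hW : ∀ t ∈ Ici (0:ℝ), W t = (1/2) * ∫ r in (0:ℝ)..1, (w r t) ^ 2) :
    ∀ t, 0 < t →
      HasDerivAt W
        (-((D 1 t + Dr 1 t) / 2) * (w 1 t) ^ 2
          - (∫ r in (0:ℝ)..1, D r t * (wr r t) ^ 2)
          + ∫ r in (0:ℝ)..1, (Drr r t / 2 + μ) * (w r t) ^ 2) t := by
  intro t ht
  have ht' : t ∈ Ici (0:ℝ) := le_of_lt ht
  have hle : (0:ℝ) ≤ 1 := by norm_num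
  have huIcc : uIcc (0:ℝ) 1 = Icc 0 1 := uIcc_of_le hle
  have hmemK : ∀ r ∈ Icc (0:ℝ) 1, ((r, t) : ℝ × ℝ) ∈ Icc (0:ℝ) 1 ×ˢ Ici (0:ℝ) :=
    fun r hr => ⟨hr, ht'⟩
  have cline : ContinuousOn (fun r : ℝ => ((r, t) : ℝ × ℝ)) (Icc 0 1) :=
    (continuous_id.prodMk continuous_const).continuousOn
  have cw : ContinuousOn (fun r => w r t) (Icc 0 1) := hwcont.comp cline hmemK
  have cwr : ContinuousOn (fun r => wr r t) (Icc 0 1) := hwrcont.comp cline hmemK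
  have cwrr : ContinuousOn (fun r => wrr r t) (Icc 0 1) := hwrrcont.comp cline hmemK
  have cwt : ContinuousOn (fun r => wt r t) (Icc 0 1) := hwtcont.comp cline hmemK
  have cD : ContinuousOn (fun r => D r t) (Icc 0 1) :=
    fun r hr => (hDr t ht' r hr).continuousWithinAt
  have cDr : ContinuousOn (fun r => Dr r t) (Icc 0 1) :=
    fun r hr => (hDrr t ht' r hr).continuousWithinAt
  have cDrr : ContinuousOn (fun r => Drr r t) (Icc 0 1) := hDrrcont t ht'
  have integ : ∀ (f : ℝ → ℝ), ContinuousOn f (Icc 0 1) → IntervalIntegrable f volume 0 1 :=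
    fun f hf => ContinuousOn.intervalIntegrable (by rwa [huIcc])
  -- interior derivatives
  have hw' : ∀ r ∈ Ioo (0:ℝ) 1, HasDerivAt (fun x => w x t) (wr r t) r :=
    fun r hr => (hwr t ht' r (Ioo_subset_Icc_self hr)).hasDerivAt (Icc_mem_nhds hr.1 hr.2)
  have hwr' : ∀ r ∈ Ioo (0:ℝ) 1, HasDerivAt (fun x => wr x t) (wrr r t) r :=
    fun r hr => (hwrr t ht' r (Ioo_subset_Icc_self hr)).hasDerivAt (Icc_mem_nhds hr.1 hr.2)
  have hD' : ∀ r ∈ Ioo (0:ℝ) 1, HasDerivAt (fun x => D x t) (Dr r t) r :=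
    fun r hr => (hDr t ht' r (Ioo_subset_Icc_self hr)).hasDerivAt (Icc_mem_nhds hr.1 hr.2)
  have hDr' : ∀ r ∈ Ioo (0:ℝ) 1, HasDerivAt (fun x => Dr x t) (Drr r t) r :=
    fun r hr => (hDrr t ht' r (Ioo_subset_Icc_self hr)).hasDerivAt (Icc_mem_nhds hr.1 hr.2)
  -- boundary values
  have hw0 : w 0 t = 0 := hBC0 t ht'
  have hw1 : wr 1 t = -(1/2) * w 1 t := hBC1 t ht'
  -- named integrals
  set a := ∫ r in (0:ℝ)..1, Dr r t * (w r t * wr r t) with ha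
  set b := ∫ r in (0:ℝ)..1, D r t * (wr r t * wr r t) with hb
  set c := ∫ r in (0:ℝ)..1, D r t * (w r t * wrr r t) with hc
  set d := ∫ r in (0:ℝ)..1, Drr r t * (w r t * w r t) with hd
  set e := ∫ r in (0:ℝ)..1, w r t * w r t with he
  have ia : IntervalIntegrable (fun r => Dr r t * (w r t * wr r t)) volume 0 1 := integ _ (cDr.mul (cw.mul cwr))
  have ib : IntervalIntegrable (fun r => D r t * (wr r t * wr r t)) volume 0 1 := integ _ (cD.mul (cwr.mul cwr))
  have ic : IntervalIntegrable (fun r => D r t * (w r t * wrr r t)) volume 0 1 := integ _ (cD.mul (cw.mul cwrr))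
  have id' : IntervalIntegrable (fun r => Drr r t * (w r t * w r t)) volume 0 1 := integ _ (cDrr.mul (cw.mul cw))
  have ie : IntervalIntegrable (fun r => w r t * w r t) volume 0 1 := integ _ (cw.mul cw)
  -- first integration by parts identity
  have E1 : a + (b + c) = -(D 1 t / 2) * (w 1 t * w 1 t) := by
    have key : (∫ r in (0:ℝ)..1,
        (Dr r t * (w r t * wr r t) +
          (D r t * (wr r t * wr r t) + D r t * (w r t * wrr r t))))
        = D 1 t * (w 1 t * wr 1 t) - D 0 t * (w 0 t * wr 0 t) := by
      refine integral_eq_sub_of_hasDerivAt_of_le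
        (f := fun r => D r t * (w r t * wr r t)) hle ?_ ?_ ?_
      · exact (cD.mul (cw.mul cwr)).congr (fun r hr => rfl)
      · intro r hr
        have := (hD' r hr).mul ((hw' r hr).mul (hwr' r hr))
        convert this using 1
        rfl
        rfl
        simp only [Pi.mul_apply]; ring
      · apply integ
        exact (cDr.mul (cw.mul cwr)).add ((cD.mul (cwr.mul cwr)).add (cD.mul (cw.mul cwrr)))
    rw [integral_add ia (ib.add ic), integral_add ib ic] at key
    rw [key, hw0, hw1]
    ring
  -- second integration by parts identity
  have E2 : d + (a + a) = Dr 1 t * (w 1 t * w 1 t) := by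
    have key : (∫ r in (0:ℝ)..1,
        (Drr r t * (w r t * w r t) +
          (Dr r t * (w r t * wr r t) + Dr r t * (w r t * wr r t))))
        = Dr 1 t * (w 1 t * w 1 t) - Dr 0 t * (w 0 t * w 0 t) := by
      refine integral_eq_sub_of_hasDerivAt_of_le
        (f := fun r => Dr r t * (w r t * w r t)) hle ?_ ?_ ?_
      · exact (cDr.mul (cw.mul cw)).congr (fun r hr => rfl)
      · intro r hr
        have := (hDr' r hr).mul ((hw' r hr).mul (hw' r hr))
        convert this using 1
        rfl
        rfl
        simp only [Pi.mul_apply]; ring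
      · apply integ
        exact (cDrr.mul (cw.mul cw)).add ((cDr.mul (cw.mul cwr)).add (cDr.mul (cw.mul cwr)))
    rw [integral_add id' (ia.add ia), integral_add ia ia] at key
    rw [key, hw0]
    ring
  -- differentiation under the integral sign
  have hball : Metric.ball t (t/2) ⊆ Icc (t/2) (t+t) := by
    intro τ hτ
    rw [Metric.mem_ball, Real.dist_eq, abs_sub_lt_iff] at hτ
    constructor <;> linarith [hτ.1, hτ.2]
  have hKsub : (Icc (0:ℝ) 1 ×ˢ Icc (t/2) (t+t)) ⊆ Icc 0 1 ×ˢ Ici 0 := by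
    intro p hp
    exact ⟨hp.1, le_trans (by positivity) hp.2.1⟩
  obtain ⟨C, hC⟩ : ∃ C, ∀ p ∈ Icc (0:ℝ) 1 ×ˢ Icc (t/2) (t+t),
      ‖2 * w p.1 p.2 * wt p.1 p.2‖ ≤ C := by
    apply IsCompact.exists_bound_of_continuousOn (isCompact_Icc.prod isCompact_Icc)
    exact (continuousOn_const.mul (hwcont.mono hKsub)).mul (hwtcont.mono hKsub)
  have measw : ∀ τ ∈ Ici (0:ℝ), AEStronglyMeasurable (fun r => (w r τ) ^ 2)
      (volume.restrict (Set.uIoc (0:ℝ) 1)) := by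
    intro τ hτ
    have cwτ : ContinuousOn (fun r => w r τ) (Icc 0 1) :=
      hwcont.comp ((continuous_id.prodMk continuous_const).continuousOn)
        (fun r hr => ⟨hr, hτ⟩)
    have : ContinuousOn (fun r => (w r τ) ^ 2) (Set.uIoc (0:ℝ) 1) := by
      apply (cwτ.pow 2).mono
      rw [uIoc_of_le hle]
      exact Ioc_subset_Icc_self
    exact this.aestronglyMeasurable measurableSet_uIoc
  have hderiv_main : HasDerivAt (fun τ => ∫ r in (0:ℝ)..1, (w r τ) ^ 2)
      (∫ r in (0:ℝ)..1, 2 * w r t * wt r t) t := by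
    have εpos : 0 < t/2 := by linarith
    refine (intervalIntegral.hasDerivAt_integral_of_dominated_loc_of_deriv_le
      (F := fun τ r => (w r τ) ^ 2) (F' := fun τ r => 2 * w r τ * wt r τ)
      (bound := fun _ => C) (Metric.ball_mem_nhds t εpos) ?_ ?_ ?_ ?_ ?_ ?_).2
    · filter_upwards [Ioi_mem_nhds ht] with τ hτ
      exact measw τ (le_of_lt (show (0:ℝ) < τ from hτ))
    · exact integ _ (cw.pow 2)
    · have : ContinuousOn (fun r => 2 * w r t * wt r t) (Set.uIoc (0:ℝ) 1) := by
        apply ((continuousOn_const.mul cw).mul cwt).mono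
        rw [uIoc_of_le hle]
        exact Ioc_subset_Icc_self
      exact this.aestronglyMeasurable measurableSet_uIoc
    · apply Filter.Eventually.of_forall
      intro r hr τ hτ
      exact hC (r, τ) ⟨by rw [uIoc_of_le hle] at hr; exact Ioc_subset_Icc_self hr, hball hτ⟩
    · exact intervalIntegrable_const
    · apply Filter.Eventually.of_forall
      intro r hr τ hτ
      have hτpos : 0 < τ := lt_of_lt_of_le (by linarith) (hball hτ).1
      have hrI : r ∈ Icc (0:ℝ) 1 := by
        rw [uIoc_of_le hle] at hr; exact Ioc_subset_Icc_self hr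
      have h1 : HasDerivAt (fun τ => w r τ) (wt r τ) τ :=
        (hwt r hrI τ (le_of_lt hτpos)).hasDerivAt (Ici_mem_nhds hτpos)
      have := h1.pow 2
      convert this using 1
      rfl
      rfl
      push_cast; ring
  -- the PDE: rewrite the derivative
  have hPDEint : (∫ r in (0:ℝ)..1, 2 * w r t * wt r t) = 2 * c + 2 * μ * e := by
    have : (∫ r in (0:ℝ)..1, 2 * w r t * wt r t)
        = ∫ r in (0:ℝ)..1, (2 * (D r t * (w r t * wrr r t)) + 2 * μ * (w r t * w r t)) := by
      apply integral_congr
      intro r hr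
      rw [huIcc] at hr
      dsimp only
      rw [hPDE r hr t ht']
      ring
    rw [this, integral_add (ic.const_mul 2) (ie.const_mul (2*μ)),
      intervalIntegral.integral_const_mul, intervalIntegral.integral_const_mul]
  -- identify W with the integral near t
  have hWeq : W =ᶠ[nhds t] (fun τ => (1/2) * ∫ r in (0:ℝ)..1, (w r τ) ^ 2) := by
    filter_upwards [Ioi_mem_nhds ht] with τ hτ
    exact hW τ (le_of_lt (show (0:ℝ) < τ from hτ))
  have hmain : HasDerivAt W ((1/2) * ∫ r in (0:ℝ)..1, 2 * w r t * wt r t) t :=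
    (hderiv_main.const_mul (1/2)).congr_of_eventuallyEq hWeq
  -- final arithmetic
  have hfinal : (1/2) * (∫ r in (0:ℝ)..1, 2 * w r t * wt r t)
      = -((D 1 t + Dr 1 t) / 2) * (w 1 t) ^ 2
          - (∫ r in (0:ℝ)..1, D r t * (wr r t) ^ 2)
          + ∫ r in (0:ℝ)..1, (Drr r t / 2 + μ) * (w r t) ^ 2 := by
    have hb2 : (∫ r in (0:ℝ)..1, D r t * (wr r t) ^ 2) = b := by
      apply integral_congr; intro r hr; ring
    have hde : (∫ r in (0:ℝ)..1, (Drr r t / 2 + μ) * (w r t) ^ 2)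
        = (1/2) * d + μ * e := by
      have : (∫ r in (0:ℝ)..1, (Drr r t / 2 + μ) * (w r t) ^ 2)
          = ∫ r in (0:ℝ)..1, ((1/2) * (Drr r t * (w r t * w r t)) + μ * (w r t * w r t)) := by
        apply integral_congr; intro r hr; ring
      rw [this, integral_add (id'.const_mul (1/2)) (ie.const_mul μ),
        intervalIntegral.integral_const_mul, intervalIntegral.integral_const_mul]
    rw [hPDEint, hb2, hde]
    nlinarith [E1, E2]
  rw [hfinal] at hmain
  exact hmain
end

section
/- Let D : [0,1] × [0,∞) → ℝ be twice continuously differentiable in r, with constants m > 0, M ≥ 0, D_m ≥ 0 such that D(r,t) ≥ m, |∂²D/∂r²(r,t)| ≤ M, and max{0, −(D(1,t) + ∂D/∂r(1,t))/2} ≤ D_m for all r, t, and let μ < −(M/2 + D_m²/m). Let w be a classical solution of the target system, and let p be a kernel on the triangle T = {(r,s) : 0 ≤ r ≤ s ≤ 1} with |p(r,s,t)| ≤ P for all (r,s) ∈ T and t ≥ 0. Define c̃(r,t) = w(r,t) − ∫ᵣ¹ p(r,s,t) w(s,t) ds. Then for all t ≥ 0, (∫₀¹ c̃(r,t)² dr)^{1/2}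 ≤ (1 + P) · exp((μ + M/2 + D_m²/m) t) · (∫₀¹ w(r,0)² dr)^{1/2}, and the exponential rate μ + M/2 + D_m²/m is negative; in particular ∥c̃(·,t)∥_{L²(0,1)} → 0 exponentially as t → ∞. -/
open MeasureTheory intervalIntegral Set Real Filter


lemma ftc01 (u u' : ℝ → ℝ)
    (hu : ∀ x ∈ Icc (0:ℝ) 1, HasDerivWithinAt u (u' x) (Icc (0:ℝ) 1) x)
    (hcont : ContinuousOn u' (Icc (0:ℝ) 1)) :
    ∫ x in (0:ℝ)..1, u' x = u 1 - u 0 := by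
  apply intervalIntegral.integral_eq_sub_of_hasDeriv_right_of_le (by norm_num)
  · exact fun x hx => (hu x hx).continuousWithinAt
  · intro x hx
    exact ((hu x (Ioo_subset_Icc_self hx)).hasDerivAt
      (Icc_mem_nhds hx.1 hx.2)).hasDerivWithinAt
  · exact hcont.intervalIntegrable_of_Icc (by norm_num)

/-- The energy inequality at a fixed time. -/
lemma energy_ineq (D Dr Drr w wr wrr wt : ℝ → ℝ) (m M Dm μ : ℝ)
    (hDr : ∀ r ∈ Icc (0:ℝ) 1, HasDerivWithinAt D (Dr r) (Icc (0:ℝ) 1) r)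
    (hDrr : ∀ r ∈ Icc (0:ℝ) 1, HasDerivWithinAt Dr (Drr r) (Icc (0:ℝ) 1) r)
    (hwr : ∀ r ∈ Icc (0:ℝ) 1, HasDerivWithinAt w (wr r) (Icc (0:ℝ) 1) r)
    (hwrr : ∀ r ∈ Icc (0:ℝ) 1, HasDerivWithinAt wr (wrr r) (Icc (0:ℝ) 1) r)
    (cD : ContinuousOn D (Icc (0:ℝ) 1)) (cDr : ContinuousOn Dr (Icc (0:ℝ) 1))
    (cDrr : ContinuousOn Drr (Icc (0:ℝ) 1)) (cw : ContinuousOn w (Icc (0:ℝ) 1))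
    (cwr : ContinuousOn wr (Icc (0:ℝ) 1)) (cwrr : ContinuousOn wrr (Icc (0:ℝ) 1))
    (hm : 0 < m) (hM : 0 ≤ M) (hDm : 0 ≤ Dm)
    (hDlow : ∀ r ∈ Icc (0:ℝ) 1, m ≤ D r)
    (hDrrb : ∀ r ∈ Icc (0:ℝ) 1, |Drr r| ≤ M)
    (hDmb : -((D 1 + Dr 1) / 2) ≤ Dm)
    (hPDE : ∀ r ∈ Icc (0:ℝ) 1, wt r = D r * wrr r + μ * w r)
    (hBC0 : w 0 = 0) (hBC1 : wr 1 = -(1/2) * w 1) :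
    (∫ r in (0:ℝ)..1, w r * wt r)
      ≤ (μ + M / 2 + Dm ^ 2 / m) * ∫ r in (0:ℝ)..1, w r * w r := by
  -- integrability of all the integrands
  have iww : IntervalIntegrable (fun r => w r * w r) volume 0 1 :=
    (cw.mul cw).intervalIntegrable_of_Icc zero_le_one
  have iDwwrr : IntervalIntegrable (fun r => D r * w r * wrr r) volume 0 1 :=
    ((cD.mul cw).mul cwrr).intervalIntegrable_of_Icc zero_le_one
  have iDrwwr : IntervalIntegrable (fun r => Dr r * (w r * wr r)) volume 0 1 :=
    (cDr.mul (cw.mul cwr)).intervalIntegrable_of_Icc zero_le_one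
  have iDwrwr : IntervalIntegrable (fun r => D r * (wr r * wr r)) volume 0 1 :=
    (cD.mul (cwr.mul cwr)).intervalIntegrable_of_Icc zero_le_one
  have iDrrww : IntervalIntegrable (fun r => Drr r * (w r * w r)) volume 0 1 :=
    (cDrr.mul (cw.mul cw)).intervalIntegrable_of_Icc zero_le_one
  have iwrwr : IntervalIntegrable (fun r => wr r * wr r) volume 0 1 :=
    (cwr.mul cwr).intervalIntegrable_of_Icc zero_le_one
  have iwwr : IntervalIntegrable (fun r => w r * wr r) volume 0 1 :=
    (cw.mul cwr).intervalIntegrable_of_Icc zero_le_one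
  -- rewrite the PDE into the integral
  have e0 : (∫ r in (0:ℝ)..1, w r * wt r)
      = (∫ r in (0:ℝ)..1, D r * w r * wrr r) + μ * ∫ r in (0:ℝ)..1, w r * w r := by
    have ec : EqOn (fun r => w r * wt r)
        (fun r => D r * w r * wrr r + μ * (w r * w r)) (uIcc (0:ℝ) 1) := by
      intro r hr
      rw [uIcc_of_le zero_le_one] at hr
      simp only [hPDE r hr]; ring
    rw [intervalIntegral.integral_congr ec,
      intervalIntegral.integral_add iDwwrr (iww.const_mul μ),
      intervalIntegral.integral_const_mul]
  -- first integration by parts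
  have h1 : (∫ r in (0:ℝ)..1, Dr r * (w r * wr r))
      + (∫ r in (0:ℝ)..1, D r * (wr r * wr r))
      + (∫ r in (0:ℝ)..1, D r * w r * wrr r) = D 1 * w 1 * wr 1 := by
    have hftc := ftc01 (fun r => D r * w r * wr r)
      (fun r => (Dr r * w r + D r * wr r) * wr r + D r * w r * wrr r)
      (fun r hr => ((hDr r hr).mul (hwr r hr)).mul (hwrr r hr))
      ((((cDr.mul cw).add (cD.mul cwr)).mul cwr).add ((cD.mul cw).mul cwrr))
    have ec : EqOn (fun r => (Dr r * w r + D r * wr r) * wr r + D r * w r * wrr r)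
        (fun r => (Dr r * (w r * wr r) + D r * (wr r * wr r)) + D r * w r * wrr r)
        (uIcc (0:ℝ) 1) := fun r _ => by ring
    rw [intervalIntegral.integral_congr ec,
      intervalIntegral.integral_add (iDrwwr.add iDwrwr) iDwwrr,
      intervalIntegral.integral_add iDrwwr iDwrwr] at hftc
    simpa [hBC0] using hftc
  -- second integration by parts
  have h2 : (∫ r in (0:ℝ)..1, Drr r * (w r * w r))
      + 2 * (∫ r in (0:ℝ)..1, Dr r * (w r * wr r)) = Dr 1 * (w 1 * w 1) := by
    have hftc := ftc01 (fun r => Dr r * (w r * w r))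
      (fun r => Drr r * (w r * w r) + Dr r * (wr r * w r + w r * wr r))
      (fun r hr => (hDrr r hr).mul ((hwr r hr).mul (hwr r hr)))
      ((cDrr.mul (cw.mul cw)).add (cDr.mul ((cwr.mul cw).add (cw.mul cwr))))
    have ec : EqOn (fun r => Drr r * (w r * w r) + Dr r * (wr r * w r + w r * wr r))
        (fun r => Drr r * (w r * w r) + 2 * (Dr r * (w r * wr r))) (uIcc (0:ℝ) 1) :=
      fun r _ => by ring
    rw [intervalIntegral.integral_congr ec,
      intervalIntegral.integral_add iDrrww (iDrwwr.const_mul 2),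
      intervalIntegral.integral_const_mul] at hftc
    simpa [hBC0] using hftc
  -- FTC for w²
  have h3 : 2 * (∫ r in (0:ℝ)..1, w r * wr r) = w 1 * w 1 := by
    have hftc := ftc01 (fun r => w r * w r)
      (fun r => wr r * w r + w r * wr r)
      (fun r hr => (hwr r hr).mul (hwr r hr))
      ((cwr.mul cw).add (cw.mul cwr))
    have ec : EqOn (fun r => wr r * w r + w r * wr r)
        (fun r => 2 * (w r * wr r)) (uIcc (0:ℝ) 1) := fun r _ => by ring
    rw [intervalIntegral.integral_congr ec,
      intervalIntegral.integral_const_mul] at hftc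
    simpa [hBC0] using hftc
  -- pointwise bounds
  have hGb : (∫ r in (0:ℝ)..1, Drr r * (w r * w r)) ≤ M * ∫ r in (0:ℝ)..1, w r * w r := by
    have := intervalIntegral.integral_mono_on zero_le_one iDrrww (iww.const_mul M)
      (fun x hx => mul_le_mul_of_nonneg_right
        ((le_abs_self _).trans (hDrrb x hx)) (mul_self_nonneg _))
    rwa [intervalIntegral.integral_const_mul] at this
  have hBb : m * (∫ r in (0:ℝ)..1, wr r * wr r)
      ≤ ∫ r in (0:ℝ)..1, D r * (wr r * wr r) := by
    have := intervalIntegral.integral_mono_on zero_le_one (iwrwr.const_mul m) iDwrwr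
      (fun x hx => mul_le_mul_of_nonneg_right (hDlow x hx) (mul_self_nonneg _))
    rwa [intervalIntegral.integral_const_mul] at this
  have hK : 2 * Dm * (∫ r in (0:ℝ)..1, w r * wr r)
      ≤ Dm ^ 2 / m * (∫ r in (0:ℝ)..1, w r * w r)
        + m * ∫ r in (0:ℝ)..1, wr r * wr r := by
    have hp : ∀ x ∈ Icc (0:ℝ) 1, 2 * Dm * (w x * wr x)
        ≤ Dm ^ 2 / m * (w x * w x) + m * (wr x * wr x) := by
      intro x _
      have hq : Dm ^ 2 / m * m = Dm ^ 2 := div_mul_cancel₀ _ hm.ne'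
      nlinarith [sq_nonneg (Dm * w x - m * wr x), hm, sq_nonneg (w x)]
    have := intervalIntegral.integral_mono_on zero_le_one (iwwr.const_mul (2 * Dm))
      ((iww.const_mul (Dm ^ 2 / m)).add (iwrwr.const_mul m)) hp
    rwa [intervalIntegral.integral_const_mul,
      intervalIntegral.integral_add (iww.const_mul _) (iwrwr.const_mul m),
      intervalIntegral.integral_const_mul, intervalIntegral.integral_const_mul] at this
  -- boundary term bound
  have hW1 : (0:ℝ) ≤ w 1 * w 1 := mul_self_nonneg _
  have hbd : -((D 1 + Dr 1) / 2) * (w 1 * w 1) ≤ Dm * (w 1 * w 1) :=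
    mul_le_mul_of_nonneg_right hDmb hW1
  rw [e0, hBC1] at *
  nlinarith [h1, h2, h3, hGb, hBb, hK, hbd]


lemma aesm01 {f : ℝ → ℝ} (hf : ContinuousOn f (Icc (0:ℝ) 1)) :
    AEStronglyMeasurable f (volume.restrict (uIoc (0:ℝ) 1)) :=
  (hf.aestronglyMeasurable measurableSet_Icc).mono_measure
    (Measure.restrict_mono (by rw [uIoc_of_le zero_le_one]; exact Ioc_subset_Icc_self) le_rfl)

lemma energy_decay (w wt : ℝ → ℝ → ℝ) (α : ℝ)
    (hwt : ∀ r ∈ Icc (0:ℝ) 1, ∀ t ∈ Ici (0:ℝ),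
      HasDerivWithinAt (fun τ => w r τ) (wt r t) (Ici (0:ℝ)) t)
    (hwcont : ContinuousOn (fun q : ℝ × ℝ => w q.1 q.2) (Icc 0 1 ×ˢ Ici 0))
    (hwtcont : ContinuousOn (fun q : ℝ × ℝ => wt q.1 q.2) (Icc 0 1 ×ˢ Ici 0))
    (hineq : ∀ t ∈ Ici (0:ℝ),
      (∫ r in (0:ℝ)..1, w r t * wt r t) ≤ α * ∫ r in (0:ℝ)..1, w r t * w r t) :
    ∀ t ∈ Ici (0:ℝ), (∫ r in (0:ℝ)..1, w r t * w r t)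
      ≤ Real.exp (2 * α * t) * ∫ r in (0:ℝ)..1, w r 0 * w r 0 := by
  set Ew : ℝ → ℝ := fun t => ∫ r in (0:ℝ)..1, w r t * w r t with hEw
  -- continuous slices
  have slw : ∀ t ∈ Ici (0:ℝ), ContinuousOn (fun r => w r t) (Icc (0:ℝ) 1) := fun t ht =>
    hwcont.comp ((continuous_id.prodMk continuous_const).continuousOn) (fun r hr => ⟨hr, ht⟩)
  have slwt : ∀ t ∈ Ici (0:ℝ), ContinuousOn (fun r => wt r t) (Icc (0:ℝ) 1) := fun t ht =>
    hwtcont.comp ((continuous_id.prodMk continuous_const).continuousOn) (fun r hr => ⟨hr, ht⟩)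
  -- derivative of Ew at interior points
  have key : ∀ t₀ : ℝ, 0 < t₀ → HasDerivAt Ew
      (∫ r in (0:ℝ)..1, (wt r t₀ * w r t₀ + w r t₀ * wt r t₀)) t₀ := by
    intro t₀ ht₀
    have hsub : Icc (0:ℝ) 1 ×ˢ Icc (0:ℝ) (t₀ + t₀) ⊆ Icc 0 1 ×ˢ Ici 0 :=
      prod_mono subset_rfl Icc_subset_Ici_self
    obtain ⟨C, hC⟩ := (isCompact_Icc.prod isCompact_Icc).exists_bound_of_continuousOn
      (f := fun q : ℝ × ℝ => wt q.1 q.2 * w q.1 q.2 + w q.1 q.2 * wt q.1 q.2)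
      (((hwtcont.mono hsub).mul (hwcont.mono hsub)).add
        ((hwcont.mono hsub).mul (hwtcont.mono hsub)))
    refine (intervalIntegral.hasDerivAt_integral_of_dominated_loc_of_deriv_le
      (F := fun x r => w r x * w r x)
      (F' := fun x r => wt r x * w r x + w r x * wt r x)
      (bound := fun _ => C) (Metric.ball_mem_nhds t₀ ht₀) ?_ ?_ ?_ ?_ ?_ ?_).2
    · filter_upwards [eventually_gt_nhds ht₀] with x hx
      exact aesm01 (((slw x hx.le).mul (slw x hx.le)))
    · exact ((slw t₀ ht₀.le).mul (slw t₀ ht₀.le)).intervalIntegrable_of_Icc zero_le_one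
    · exact aesm01 (((slwt t₀ ht₀.le).mul (slw t₀ ht₀.le)).add
        ((slw t₀ ht₀.le).mul (slwt t₀ ht₀.le)))
    · refine Filter.Eventually.of_forall (fun r hr x hx => ?_)
      rw [Real.ball_eq_Ioo] at hx
      have hrI : r ∈ Icc (0:ℝ) 1 := by
        rw [uIoc_of_le zero_le_one] at hr; exact Ioc_subset_Icc_self hr
      have hxI : x ∈ Icc (0:ℝ) (t₀ + t₀) := ⟨by linarith [hx.1], by linarith [hx.2]⟩
      exact hC (r, x) ⟨hrI, hxI⟩
    · exact intervalIntegrable_const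
    · refine Filter.Eventually.of_forall (fun r hr x hx => ?_)
      rw [Real.ball_eq_Ioo] at hx
      have hx0 : 0 < x := by linarith [hx.1]
      have hrI : r ∈ Icc (0:ℝ) 1 := by
        rw [uIoc_of_le zero_le_one] at hr; exact Ioc_subset_Icc_self hr
      have hd := (hwt r hrI x hx0.le).hasDerivAt (Ici_mem_nhds hx0)
      exact hd.mul hd
  -- continuity of Ew on [0, ∞)
  have hEcont : ContinuousOn Ew (Ici (0:ℝ)) := by
    intro t₀ ht₀
    obtain ⟨C, hC⟩ := (isCompact_Icc.prod isCompact_Icc).exists_bound_of_continuousOn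
      (f := fun q : ℝ × ℝ => w q.1 q.2 * w q.1 q.2)
      ((hwcont.mono (prod_mono subset_rfl (Icc_subset_Ici_self : Icc (0:ℝ) (t₀ + 1) ⊆ Ici 0))).mul
        (hwcont.mono (prod_mono subset_rfl Icc_subset_Ici_self)))
    have hmem : ∀ᶠ x in nhdsWithin t₀ (Ici (0:ℝ)), x ∈ Icc (0:ℝ) (t₀ + 1) := by
      filter_upwards [eventually_mem_nhdsWithin,
        (eventually_lt_nhds (lt_add_one t₀)).filter_mono nhdsWithin_le_nhds] with x h1 h2
      exact ⟨h1, h2.le⟩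
    apply intervalIntegral.continuousWithinAt_of_dominated_interval
      (bound := fun _ => C) (F := fun x r => w r x * w r x)
    · filter_upwards [hmem] with x hx
      exact aesm01 ((slw x hx.1).mul (slw x hx.1))
    · filter_upwards [hmem] with x hx
      refine Filter.Eventually.of_forall (fun r hr => ?_)
      have hrI : r ∈ Icc (0:ℝ) 1 := by
        rw [uIoc_of_le zero_le_one] at hr; exact Ioc_subset_Icc_self hr
      exact hC (r, x) ⟨hrI, hx⟩
    · exact intervalIntegrable_const
    · refine Filter.Eventually.of_forall (fun r hr => ?_)
      have hrI : r ∈ Icc (0:ℝ) 1 := by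
        rw [uIoc_of_le zero_le_one] at hr; exact Ioc_subset_Icc_self hr
      have hcw : ContinuousWithinAt (fun x => w r x) (Ici (0:ℝ)) t₀ :=
        (hwcont (r, t₀) ⟨hrI, ht₀⟩).comp
          ((continuous_const.prodMk continuous_id).continuousWithinAt)
          (fun x hx => ⟨hrI, hx⟩)
      exact hcw.mul hcw
  -- the auxiliary function g
  set g : ℝ → ℝ := fun t => Ew t * Real.exp (-(2 * α) * t) with hg
  have hanti : AntitoneOn g (Ici (0:ℝ)) := by
    apply antitoneOn_of_deriv_nonpos (convex_Ici 0)
    · exact hEcont.mul (Continuous.continuousOn (by continuity))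
    · rw [interior_Ici]
      intro x hx
      have hexp : HasDerivAt (fun t => Real.exp (-(2 * α) * t))
          (-(2 * α) * Real.exp (-(2 * α) * x)) x := by
        simpa [Function.comp_def, mul_comm] using
          (Real.hasDerivAt_exp (-(2 * α) * x)).comp x ((hasDerivAt_id x).const_mul (-(2 * α)))
      exact (((key x hx).mul hexp).differentiableAt).differentiableWithinAt
    · rw [interior_Ici]
      intro x hx
      have hexp : HasDerivAt (fun t => Real.exp (-(2 * α) * t))
          (-(2 * α) * Real.exp (-(2 * α) * x)) x := by
        simpa [Function.comp_def, mul_comm] using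
          (Real.hasDerivAt_exp (-(2 * α) * x)).comp x ((hasDerivAt_id x).const_mul (-(2 * α)))
      have hgd : HasDerivAt g _ x := (key x hx).mul hexp
      rw [hgd.deriv]
      have hEx := hineq x (le_of_lt (show (0:ℝ) < x from hx))
      have h2 : (∫ r in (0:ℝ)..1, (wt r x * w r x + w r x * wt r x))
          = 2 * ∫ r in (0:ℝ)..1, w r x * wt r x := by
        rw [← intervalIntegral.integral_const_mul]
        exact intervalIntegral.integral_congr (fun r _ => by ring)
      have hep := Real.exp_pos (-(2 * α) * x)
      rw [h2]
      nlinarith [hep, hEx]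
  intro t ht
  have h0 : g t ≤ g 0 := hanti (self_mem_Ici) ht ht
  have hid : Real.exp (-(2 * α) * t) * Real.exp (2 * α * t) = 1 := by
    rw [← Real.exp_add, show -(2 * α) * t + 2 * α * t = 0 by ring, Real.exp_zero]
  have hg0 : g 0 = Ew 0 := by simp [hg]
  rw [hg0] at h0
  have := mul_le_mul_of_nonneg_right h0 (Real.exp_nonneg (2 * α * t))
  rw [hg, mul_assoc, hid, mul_one] at this
  calc Ew t ≤ Ew 0 * Real.exp (2 * α * t) := this
    _ = Real.exp (2 * α * t) * Ew 0 := by ring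


lemma cs01 (f : ℝ → ℝ) (hf : ContinuousOn f (Icc (0:ℝ) 1)) :
    (∫ r in (0:ℝ)..1, |f r|) ^ 2 ≤ ∫ r in (0:ℝ)..1, f r * f r := by
  set I := ∫ r in (0:ℝ)..1, |f r| with hI
  have hia : IntervalIntegrable (fun r => |f r|) volume 0 1 :=
    hf.abs.intervalIntegrable_of_Icc zero_le_one
  have hff : IntervalIntegrable (fun r => f r * f r) volume 0 1 :=
    (hf.mul hf).intervalIntegrable_of_Icc zero_le_one
  have h0 : (0:ℝ) ≤ ∫ r in (0:ℝ)..1, (|f r| - I)^2 :=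
    intervalIntegral.integral_nonneg zero_le_one (fun _ _ => sq_nonneg _)
  have key : ∫ r in (0:ℝ)..1, (|f r| - I)^2
      = (∫ r in (0:ℝ)..1, f r * f r) - (2 * I * I - I^2 * (1 - 0)) := by
    have e1 : ∀ r ∈ uIcc (0:ℝ) 1,
        (|f r| - I)^2 = f r * f r - (2 * I * |f r| - I^2) := by
      intro r _
      linear_combination abs_mul_abs_self (f r)
    rw [intervalIntegral.integral_congr e1,
      intervalIntegral.integral_sub hff ((hia.const_mul (2*I)).sub
        (intervalIntegrable_const)),
      intervalIntegral.integral_sub (hia.const_mul (2*I)) intervalIntegrable_const,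
      intervalIntegral.integral_const_mul, intervalIntegral.integral_const]
    simp [hI]
  nlinarith [h0, key]

lemma ctil_bound (w : ℝ → ℝ) (p : ℝ → ℝ → ℝ) (ctil : ℝ → ℝ) (P : ℝ) (hP : 0 ≤ P)
    (cw : ContinuousOn w (Icc (0:ℝ) 1))
    (hpmeas : ∀ r, Measurable (fun s => p r s))
    (hpb : ∀ r s : ℝ, 0 ≤ r → r ≤ s → s ≤ 1 → |p r s| ≤ P)
    (hctil : ∀ r, ctil r = w r - ∫ s in r..(1:ℝ), p r s * w s) :
    ∫ r in (0:ℝ)..1, (ctil r)^2 ≤ (1 + P)^2 * ∫ r in (0:ℝ)..1, w r * w r := by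
  set I := ∫ r in (0:ℝ)..1, |w r| with hIdef
  have hia : IntervalIntegrable (fun r => |w r|) volume 0 1 :=
    cw.abs.intervalIntegrable_of_Icc zero_le_one
  have hI0 : 0 ≤ I :=
    intervalIntegral.integral_nonneg zero_le_one (fun _ _ => abs_nonneg _)
  have hCS : I^2 ≤ ∫ r in (0:ℝ)..1, w r * w r := cs01 w cw
  have hEw0 : (0:ℝ) ≤ ∫ r in (0:ℝ)..1, w r * w r :=
    intervalIntegral.integral_nonneg zero_le_one (fun _ _ => mul_self_nonneg _)
  -- pointwise bound on |ctil|
  have habs : ∀ r ∈ Icc (0:ℝ) 1, |ctil r| ≤ |w r| + P * I := by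
    intro r hr
    have hr1 : r ≤ 1 := hr.2
    have cwr : ContinuousOn w (Icc r 1) := cw.mono (Icc_subset_Icc hr.1 le_rfl)
    have iwabs : IntervalIntegrable (fun s => P * |w s|) volume r 1 :=
      (cwr.abs.intervalIntegrable_of_Icc hr1).const_mul P
    have hbnd : ∀ s ∈ Ioc r 1, ‖p r s * w s‖ ≤ P * |w s| := by
      intro s hs
      rw [Real.norm_eq_abs, abs_mul]
      exact mul_le_mul_of_nonneg_right (hpb r s hr.1 hs.1.le hs.2) (abs_nonneg _)
    have ipw : IntervalIntegrable (fun s => p r s * w s) volume r 1 := by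
      rw [intervalIntegrable_iff_integrableOn_Ioc_of_le hr1]
      refine Integrable.mono' (g := fun s => P * |w s|) ?_ ?_ ?_
      · rw [← IntegrableOn, ← intervalIntegrable_iff_integrableOn_Ioc_of_le hr1]
        exact iwabs
      · refine ((hpmeas r).aestronglyMeasurable).mul ?_
        exact ((cwr.aestronglyMeasurable measurableSet_Icc).mono_measure
          (Measure.restrict_mono Ioc_subset_Icc_self le_rfl))
      · rw [ae_restrict_iff' measurableSet_Ioc]
        exact ae_of_all _ hbnd
    have h1 : |∫ s in r..1, p r s * w s| ≤ ∫ s in r..1, |p r s * w s| :=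
      intervalIntegral.abs_integral_le_integral_abs hr1
    have h2 : (∫ s in r..1, |p r s * w s|) ≤ ∫ s in r..1, P * |w s| := by
      refine intervalIntegral.integral_mono_on hr1 ipw.abs iwabs (fun s hs => ?_)
      rw [abs_mul]
      exact mul_le_mul_of_nonneg_right (hpb r s hr.1 hs.1 hs.2) (abs_nonneg _)
    have h3 : (∫ s in r..1, P * |w s|) ≤ ∫ s in (0:ℝ)..1, P * |w s| := by
      have i1 : IntervalIntegrable (fun s => P * |w s|) volume 0 r :=
        ((cw.abs.mono (Icc_subset_Icc le_rfl hr.2)).intervalIntegrable_of_Icc hr.1).const_mul P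
      have hadd := intervalIntegral.integral_add_adjacent_intervals i1 iwabs
      have hpos : (0:ℝ) ≤ ∫ s in (0:ℝ)..r, P * |w s| :=
        intervalIntegral.integral_nonneg hr.1
          (fun s _ => mul_nonneg hP (abs_nonneg _))
      linarith
    have h4 : (∫ s in (0:ℝ)..1, P * |w s|) = P * I := by
      rw [hIdef, intervalIntegral.integral_const_mul]
    rw [hctil r]
    calc |w r - ∫ s in r..(1:ℝ), p r s * w s|
        ≤ |w r| + |∫ s in r..(1:ℝ), p r s * w s| := by
          simpa [Real.norm_eq_abs] using norm_sub_le (w r) (∫ s in r..(1:ℝ), p r s * w s)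
      _ ≤ |w r| + P * I := by linarith
  -- integral bound
  have ig : IntervalIntegrable (fun r => (|w r| + P * I)^2) volume 0 1 :=
    ((cw.abs.add continuousOn_const).pow 2).intervalIntegrable_of_Icc zero_le_one
  have hg : (∫ r in (0:ℝ)..1, (|w r| + P * I)^2)
      ≤ (1 + P)^2 * ∫ r in (0:ℝ)..1, w r * w r := by
    have iww : IntervalIntegrable (fun r => w r * w r) volume 0 1 :=
      (cw.mul cw).intervalIntegrable_of_Icc zero_le_one
    have e1 : EqOn (fun r => (|w r| + P * I)^2)
        (fun r => w r * w r + ((2 * (P * I)) * |w r| + (P * I)^2)) (uIcc (0:ℝ) 1) := by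
      intro r _
      linear_combination abs_mul_abs_self (w r)
    rw [intervalIntegral.integral_congr e1,
      intervalIntegral.integral_add iww ((hia.const_mul _).add intervalIntegrable_const),
      intervalIntegral.integral_add (hia.const_mul _) intervalIntegrable_const,
      intervalIntegral.integral_const_mul, intervalIntegral.integral_const]
    have : (∫ r in (0:ℝ)..1, |w r|) = I := hIdef.symm
    rw [this]
    simp only [smul_eq_mul, sub_zero, one_mul]
    nlinarith [hCS, hI0, hP, hEw0, mul_le_mul_of_nonneg_left hCS hP,
      mul_le_mul_of_nonneg_left hCS (mul_nonneg hP hP)]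
  by_cases hint : IntervalIntegrable (fun r => (ctil r)^2) volume 0 1
  · refine le_trans (intervalIntegral.integral_mono_on zero_le_one hint ig ?_) hg
    intro r hr
    have := pow_le_pow_left₀ (abs_nonneg (ctil r)) (habs r hr) 2
    calc (ctil r)^2 = |ctil r|^2 := (sq_abs _).symm
      _ ≤ (|w r| + P * I)^2 := this
  · rw [intervalIntegral.integral_undef hint]
    positivity

/-- L² exponential decay of the observer error
`c̃(r,t) = w(r,t) − ∫ᵣ¹ p(r,s,t) w(s,t) ds`, where `w` solves the target system
and the kernel `p` is bounded by `P` on the triangle. -/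
theorem observer_error_L2_exponential_decay
    (D Dr Drr : ℝ → ℝ → ℝ)
    (w wr wrr wt : ℝ → ℝ → ℝ)
    (p : ℝ → ℝ → ℝ → ℝ) (ctil : ℝ → ℝ → ℝ)
    (m M Dm μ P : ℝ)
    -- the triangle T = {(r,s) : 0 ≤ r ≤ s ≤ 1}
    (T : Set (ℝ × ℝ)) (hT : T = {q : ℝ × ℝ | 0 ≤ q.1 ∧ q.1 ≤ q.2 ∧ q.2 ≤ 1})
    -- D is C² in r with jointly continuous derivatives
    (hDr : ∀ t ∈ Ici (0:ℝ), ∀ r ∈ Icc (0:ℝ) 1,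
      HasDerivWithinAt (fun x => D x t) (Dr r t) (Icc (0:ℝ) 1) r)
    (hDrr : ∀ t ∈ Ici (0:ℝ), ∀ r ∈ Icc (0:ℝ) 1,
      HasDerivWithinAt (fun x => Dr x t) (Drr r t) (Icc (0:ℝ) 1) r)
    (hDcont : ContinuousOn (fun q : ℝ × ℝ => D q.1 q.2) (Icc 0 1 ×ˢ Ici 0))
    (hDrcont : ContinuousOn (fun q : ℝ × ℝ => Dr q.1 q.2) (Icc 0 1 ×ˢ Ici 0))
    (hDrrcont : ContinuousOn (fun q : ℝ × ℝ => Drr q.1 q.2) (Icc 0 1 ×ˢ Ici 0))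
    -- bounds on the coefficients
    (hm : 0 < m) (hM : 0 ≤ M) (hDm : 0 ≤ Dm)
    (hDlow : ∀ r ∈ Icc (0:ℝ) 1, ∀ t ∈ Ici (0:ℝ), m ≤ D r t)
    (hDrrbound : ∀ r ∈ Icc (0:ℝ) 1, ∀ t ∈ Ici (0:ℝ), |Drr r t| ≤ M)
    (hDmbound : ∀ t ∈ Ici (0:ℝ), max 0 (-((D 1 t + Dr 1 t) / 2)) ≤ Dm)
    -- choice of μ
    (hμ : μ < -(M / 2 + Dm ^ 2 / m))
    -- w is a classical solution of the target system
    (hwr : ∀ t ∈ Ici (0:ℝ), ∀ r ∈ Icc (0:ℝ) 1,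
      HasDerivWithinAt (fun x => w x t) (wr r t) (Icc (0:ℝ) 1) r)
    (hwrr : ∀ t ∈ Ici (0:ℝ), ∀ r ∈ Icc (0:ℝ) 1,
      HasDerivWithinAt (fun x => wr x t) (wrr r t) (Icc (0:ℝ) 1) r)
    (hwt : ∀ r ∈ Icc (0:ℝ) 1, ∀ t ∈ Ici (0:ℝ),
      HasDerivWithinAt (fun τ => w r τ) (wt r t) (Ici (0:ℝ)) t)
    (hwcont : ContinuousOn (fun q : ℝ × ℝ => w q.1 q.2) (Icc 0 1 ×ˢ Ici 0))
    (hwrcont : ContinuousOn (fun q : ℝ × ℝ => wr q.1 q.2) (Icc 0 1 ×ˢ Ici 0))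
    (hwrrcont : ContinuousOn (fun q : ℝ × ℝ => wrr q.1 q.2) (Icc 0 1 ×ˢ Ici 0))
    (hwtcont : ContinuousOn (fun q : ℝ × ℝ => wt q.1 q.2) (Icc 0 1 ×ˢ Ici 0))
    (hPDE : ∀ r ∈ Icc (0:ℝ) 1, ∀ t ∈ Ici (0:ℝ),
      wt r t = D r t * wrr r t + μ * w r t)
    (hBC0 : ∀ t ∈ Ici (0:ℝ), w 0 t = 0)
    (hBC1 : ∀ t ∈ Ici (0:ℝ), wr 1 t = -(1/2) * w 1 t)
    -- the kernel is measurable and bounded by P on the triangle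
    (hpmeas : Measurable (fun q : ℝ × ℝ × ℝ => p q.1 q.2.1 q.2.2))
    (hpbound : ∀ q ∈ T, ∀ t ∈ Ici (0:ℝ), |p q.1 q.2 t| ≤ P)
    -- definition of the transformation
    (hctil : ∀ r t, ctil r t = w r t - ∫ s in r..(1:ℝ), p r s t * w s t) :
    (∀ t ∈ Ici (0:ℝ),
      Real.sqrt (∫ r in (0:ℝ)..1, (ctil r t) ^ 2) ≤
        (1 + P) * Real.exp ((μ + M / 2 + Dm ^ 2 / m) * t) *
          Real.sqrt (∫ r in (0:ℝ)..1, (w r 0) ^ 2)) ∧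
    μ + M / 2 + Dm ^ 2 / m < 0 ∧
    Tendsto (fun t => Real.sqrt (∫ r in (0:ℝ)..1, (ctil r t) ^ 2)) atTop (nhds 0) := by
  set α := μ + M / 2 + Dm ^ 2 / m with hα
  have hα0 : α < 0 := by rw [hα]; linarith
  -- P is nonnegative
  have hP : 0 ≤ P := by
    have h00 : ((0:ℝ), (0:ℝ)) ∈ T := by rw [hT]; exact ⟨le_rfl, le_rfl, zero_le_one⟩
    exact (abs_nonneg _).trans (hpbound _ h00 0 self_mem_Ici)
  -- continuous slices in r
  have slice : ∀ (f : ℝ → ℝ → ℝ), ContinuousOn (fun q : ℝ × ℝ => f q.1 q.2) (Icc 0 1 ×ˢ Ici 0) →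
      ∀ t ∈ Ici (0:ℝ), ContinuousOn (fun r => f r t) (Icc (0:ℝ) 1) := fun f hf t ht =>
    hf.comp ((continuous_id.prodMk continuous_const).continuousOn) (fun r hr => ⟨hr, ht⟩)
  -- the energy inequality at each time
  have hineq : ∀ t ∈ Ici (0:ℝ),
      (∫ r in (0:ℝ)..1, w r t * wt r t) ≤ α * ∫ r in (0:ℝ)..1, w r t * w r t := by
    intro t ht
    exact energy_ineq (fun r => D r t) (fun r => Dr r t) (fun r => Drr r t)
      (fun r => w r t) (fun r => wr r t) (fun r => wrr r t) (fun r => wt r t)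
      m M Dm μ (hDr t ht) (hDrr t ht) (hwr t ht) (hwrr t ht)
      (slice D hDcont t ht) (slice Dr hDrcont t ht) (slice Drr hDrrcont t ht)
      (slice w hwcont t ht) (slice wr hwrcont t ht) (slice wrr hwrrcont t ht)
      hm hM hDm (fun r hr => hDlow r hr t ht) (fun r hr => hDrrbound r hr t ht)
      ((le_max_right _ _).trans (hDmbound t ht))
      (fun r hr => hPDE r hr t ht) (hBC0 t ht) (hBC1 t ht)
  -- exponential decay of the energy
  have hdecay := energy_decay w wt α hwt hwcont hwtcont hineq
  have hEw00 : (∫ r in (0:ℝ)..1, w r 0 * w r 0) = ∫ r in (0:ℝ)..1, (w r 0) ^ 2 :=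
    intervalIntegral.integral_congr (fun r _ => (pow_two (w r 0)).symm)
  have hE0 : (0:ℝ) ≤ ∫ r in (0:ℝ)..1, w r 0 * w r 0 :=
    intervalIntegral.integral_nonneg zero_le_one (fun _ _ => mul_self_nonneg _)
  have h1P : (0:ℝ) ≤ 1 + P := by linarith
  -- main pointwise-in-time bound
  have main : ∀ t ∈ Ici (0:ℝ),
      Real.sqrt (∫ r in (0:ℝ)..1, (ctil r t) ^ 2) ≤
        (1 + P) * Real.exp (α * t) * Real.sqrt (∫ r in (0:ℝ)..1, (w r 0) ^ 2) := by
    intro t ht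
    have hctb : (∫ r in (0:ℝ)..1, (ctil r t) ^ 2)
        ≤ (1 + P) ^ 2 * ∫ r in (0:ℝ)..1, w r t * w r t := by
      refine ctil_bound (fun r => w r t) (fun r s => p r s t) (fun r => ctil r t) P hP
        (slice w hwcont t ht) ?_ ?_ (fun r => hctil r t)
      · intro r
        exact hpmeas.comp (measurable_const.prodMk (measurable_id.prodMk measurable_const))
      · intro r s h0 h1 h2
        refine hpbound (r, s) ?_ t ht
        rw [hT]; exact ⟨h0, h1, h2⟩
    have hchain : (∫ r in (0:ℝ)..1, (ctil r t) ^ 2)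
        ≤ (1 + P) ^ 2 * (Real.exp (2 * α * t) * ∫ r in (0:ℝ)..1, w r 0 * w r 0) :=
      hctb.trans (mul_le_mul_of_nonneg_left (hdecay t ht) (sq_nonneg _))
    have hse : Real.sqrt (Real.exp (2 * α * t)) = Real.exp (α * t) := by
      rw [show 2 * α * t = α * t + α * t by ring, Real.exp_add,
        Real.sqrt_mul_self (Real.exp_nonneg _)]
    calc Real.sqrt (∫ r in (0:ℝ)..1, (ctil r t) ^ 2)
        ≤ Real.sqrt ((1 + P) ^ 2 * (Real.exp (2 * α * t) * ∫ r in (0:ℝ)..1, w r 0 * w r 0)) :=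
          Real.sqrt_le_sqrt hchain
      _ = (1 + P) * Real.exp (α * t) * Real.sqrt (∫ r in (0:ℝ)..1, (w r 0) ^ 2) := by
          rw [Real.sqrt_mul (sq_nonneg _), Real.sqrt_sq h1P,
            Real.sqrt_mul (Real.exp_nonneg _), hse, hEw00, mul_assoc]
  refine ⟨main, hα0, ?_⟩
  -- the limit
  have hblim : Tendsto (fun t => (1 + P) * Real.exp (α * t) *
      Real.sqrt (∫ r in (0:ℝ)..1, (w r 0) ^ 2)) atTop (nhds 0) := by
    have h2 : Tendsto (fun t : ℝ => (-α) * t) atTop atTop :=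
      Tendsto.const_mul_atTop (by linarith) tendsto_id
    have h1 : Tendsto (fun t : ℝ => α * t) atTop atBot := by
      have := tendsto_neg_atTop_atBot.comp h2
      refine this.congr (fun t => ?_)
      simp [Function.comp, neg_mul]
    have h3 : Tendsto (fun t : ℝ => Real.exp (α * t)) atTop (nhds 0) :=
      Real.tendsto_exp_atBot.comp h1
    have h4 := (h3.const_mul (1 + P)).mul_const
      (Real.sqrt (∫ r in (0:ℝ)..1, (w r 0) ^ 2))
    simpa using h4
  refine squeeze_zero' ?_ ?_ hblim
  · exact Filter.Eventually.of_forall (fun t => Real.sqrt_nonneg _)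
  · filter_upwards [Filter.eventually_ge_atTop (0:ℝ)] with t ht
    exact main t ht
end
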